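/- Let m > 0 and 0 < r_ℓ < r_h. Define CP_u(p;(x,y)) = (max{p, min{y, (m-x)^+}}·r_h + min{x, m-p}·r_ℓ) / (min{y,m}·r_h + min{x, (m-y)^+}·r_ℓ). For any x ≥ 0, y ≥ 0, and protection levels p₁, p₂ with 0 ≤ p₁ ≤ p₂ ≤ min{y,m}, one has CP_u(p₂;(x,y)) ≥ CP_u(p₁;(x,y)). -/
import Mathlib


noncomputable def CPu (m rh rl p x y : ℝ) : ℝ :=
  (max p (min y (max (m - x) 0)) * rh + min x (m - p) * rl) /
    (min y m * rh + min x (max (m - y) 0) * rl)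

theorem stmt_2 (m rh rl x y p₁ p₂ : ℝ) (hm : 0 < m) (hrl : 0 < rl) (hlh : rl < rh)
    (hx : 0 ≤ x) (hy : 0 ≤ y) (h1 : 0 ≤ p₁) (h12 : p₁ ≤ p₂) (h2 : p₂ ≤ min y m) :
    CPu m rh rl p₁ x y ≤ CPu m rh rl p₂ x y := by
  unfold CPu
  rcases eq_or_lt_of_le hy with hy0 | hy0
  · have hle : p₂ ≤ 0 := h2.trans ((min_le_left y m).trans (le_of_eq hy0.symm))
    have hp2 : p₂ = 0 := le_antisymm hle (h1.trans h12)
    have hp1 : p₁ = 0 := le_antisymm (h12.trans hle) h1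
    rw [hp1, hp2]
  · have hrh : 0 < rh := hrl.trans hlh
    have hD : 0 < min y m * rh + min x (max (m - y) 0) * rl := by
      have hym : 0 < min y m := lt_min hy0 hm
      have hmin : 0 ≤ min x (max (m - y) 0) := le_min hx (le_max_right _ _)
      nlinarith
    set A := min y (max (m - x) 0) with hA_def
    have hΔ0 : max p₁ A ≤ max p₂ A := max_le_max h12 le_rfl
    have key : max p₁ A * rh + min x (m - p₁) * rl ≤
        max p₂ A * rh + min x (m - p₂) * rl := by
      rcases le_total x (m - p₂) with hc | hc
      · have e2 : min x (m - p₂) = x := min_eq_left hc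
        have e1 : min x (m - p₁) = x := min_eq_left (hc.trans (by linarith))
        rw [e1, e2]
        nlinarith [mul_nonneg (sub_nonneg.2 hΔ0) hrh.le]
      · have e2 : min x (m - p₂) = m - p₂ := min_eq_right hc
        have hA : A ≤ max (m - x) 0 := min_le_right _ _
        have hsum : max p₁ A + min x (m - p₁) ≤ m := by
          rcases le_total A p₁ with h | h
          · rw [max_eq_left h]
            have := min_le_right x (m - p₁); linarith
          · rw [max_eq_right h]
            rcases le_total (m - x) 0 with h' | h'
            · rw [max_eq_right h'] at hA
              have := min_le_right x (m - p₁); linarith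
            · rw [max_eq_left h'] at hA
              have := min_le_left x (m - p₁); linarith
        have h2' : p₂ ≤ max p₂ A := le_max_left _ _
        rw [e2]
        nlinarith [mul_nonneg (sub_nonneg.2 hΔ0) (sub_nonneg.2 hlh.le),
          mul_nonneg (show (0:ℝ) ≤ max p₂ A - max p₁ A - (min x (m - p₁) - (m - p₂)) by
            linarith) hrl.le]
    gcongr
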